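/- Let m and h be probability measures on S and suppose there is a measurable set A with m(A) − h(A) = δ > 0. For N i.i.d. samples, the total variation distance between the mixed product m^{⊗(1−α)N} ⊗ h^{⊗αN} and h^{⊗N} is at least 1 − 2·exp(−N(1−α)²δ²/2). -/

import Mathlib

open MeasureTheory Filter

/-- Total variation distance: sup over measurable sets of |P A - Q A|. -/
noncomputable def tv {S : Type*} [MeasurableSpace S] (P Q : Measure S) : ℝ :=
  ⨆ A : {A : Set S // MeasurableSet A}, |(P A.1).toReal - (Q A.1).toReal|


section Aux


lemma hoeff_bernoulli (p : ℝ) (hp0 : 0 ≤ p) (hp1 : p ≤ 1) (t : ℝ) :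
    1 - p + p * Real.exp t ≤ Real.exp (p * t + t ^ 2 / 8) := by
  have hg : ∀ s : ℝ, 0 < 1 - p + p * Real.exp s := by
    intro s
    rcases eq_or_lt_of_le hp0 with h | h
    · simp [← h]
    · nlinarith [Real.exp_pos s]
  set f : ℝ → ℝ := fun s => p * s + s ^ 2 / 8 - Real.log (1 - p + p * Real.exp s) with hf
  set φ : ℝ → ℝ := fun s => p + s / 4 - p * Real.exp s / (1 - p + p * Real.exp s) with hφdef
  have hgd : ∀ s : ℝ, HasDerivAt (fun s => 1 - p + p * Real.exp s) (p * Real.exp s) s := by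
    intro s
    simpa using ((Real.hasDerivAt_exp s).const_mul p).const_add (1 - p)
  have hderiv : ∀ s, HasDerivAt f (φ s) s := by
    intro s
    have hlog : HasDerivAt (fun s => Real.log (1 - p + p * Real.exp s))
        (p * Real.exp s / (1 - p + p * Real.exp s)) s := (hgd s).log (hg s).ne'
    have h1 : HasDerivAt (fun s : ℝ => p * s) p s := by
      simpa using (hasDerivAt_id s).const_mul p
    have h2 : HasDerivAt (fun s : ℝ => s ^ 2 / 8) (2 * s / 8) s := by
      simpa using (hasDerivAt_pow 2 s).div_const 8
    have := (h1.add h2).sub hlog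
    refine this.congr_deriv ?_
    simp [hφdef]; ring
  have hφd : ∀ s, HasDerivAt φ
      (1 / 4 - p * Real.exp s * (1 - p) / (1 - p + p * Real.exp s) ^ 2) s := by
    intro s
    have hnum : HasDerivAt (fun s => p * Real.exp s) (p * Real.exp s) s :=
      (Real.hasDerivAt_exp s).const_mul p
    have hdiv := hnum.div (hgd s) (hg s).ne'
    have h1 : HasDerivAt (fun s : ℝ => p + s / 4) (1 / 4) s := by
      simpa using ((hasDerivAt_id s).div_const 4).const_add p
    have := h1.sub hdiv
    refine this.congr_deriv ?_
    congr 1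
    rw [div_eq_div_iff (ne_of_gt (pow_pos (hg s) 2)) (ne_of_gt (pow_pos (hg s) 2))]
    ring
  have hmono : Monotone φ := by
    apply monotone_of_deriv_nonneg (fun s => (hφd s).differentiableAt)
    intro s
    rw [(hφd s).deriv, sub_nonneg, div_le_iff₀ (pow_pos (hg s) 2)]
    nlinarith [Real.exp_pos s, sq_nonneg (1 - p - p * Real.exp s)]
  have hφ0 : φ 0 = 0 := by
    have h1 : 1 - p + p * Real.exp 0 = 1 := by simp
    simp [hφdef, h1]
  have hf0 : f 0 = 0 := by
    have h1 : 1 - p + p * Real.exp 0 = 1 := by simp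
    simp [hf, h1]
  have hcont : Continuous f := by
    have : Differentiable ℝ f := fun s => (hderiv s).differentiableAt
    exact this.continuous
  have key : ∀ s, 0 ≤ f s := by
    intro s
    rcases le_total 0 s with hs | hs
    · have hm : MonotoneOn f (Set.Ici 0) := by
        apply monotoneOn_of_deriv_nonneg (convex_Ici 0) hcont.continuousOn
          (fun x _ => (hderiv x).differentiableAt.differentiableWithinAt)
        intro x hx
        rw [(hderiv x).deriv]
        rw [interior_Ici] at hx
        calc (0:ℝ) = φ 0 := hφ0.symm
          _ ≤ φ x := hmono (le_of_lt hx)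
      calc (0:ℝ) = f 0 := hf0.symm
        _ ≤ f s := hm Set.self_mem_Ici hs hs
    · have hm : AntitoneOn f (Set.Iic 0) := by
        apply antitoneOn_of_deriv_nonpos (convex_Iic 0) hcont.continuousOn
          (fun x _ => (hderiv x).differentiableAt.differentiableWithinAt)
        intro x hx
        rw [(hderiv x).deriv]
        rw [interior_Iic] at hx
        calc φ x ≤ φ 0 := hmono (le_of_lt hx)
          _ = 0 := hφ0
      calc (0:ℝ) = f 0 := hf0.symm
        _ ≤ f s := hm hs Set.self_mem_Iic hs
  have := key t
  have hlog : Real.log (1 - p + p * Real.exp t) ≤ p * t + t ^ 2 / 8 := by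
    simp only [hf] at this; linarith
  calc 1 - p + p * Real.exp t = Real.exp (Real.log (1 - p + p * Real.exp t)) :=
        (Real.exp_log (hg t)).symm
    _ ≤ _ := Real.exp_le_exp.mpr hlog

lemma integral_pi_prod {S : Type*} [MeasurableSpace S] {n : ℕ} (μ : Fin n → Measure S)
    [∀ i, SigmaFinite (μ i)] (f : Fin n → S → ℝ) :
    ∫ x, ∏ i, f i (x i) ∂(Measure.pi μ) = ∏ i, ∫ x, f i x ∂(μ i) := by
  exact integral_fintype_prod_eq_prod (𝕜 := ℝ) f

lemma integral_exp_indicator {S : Type*} [MeasurableSpace S] (μ : Measure S)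
    [IsProbabilityMeasure μ] (A : Set S) (hA : MeasurableSet A) (t : ℝ) :
    ∫ x, Real.exp (A.indicator (fun _ => t) x) ∂μ
      = 1 - (μ A).toReal + (μ A).toReal * Real.exp t := by
  have hfun : ∀ x, Real.exp (A.indicator (fun _ => t) x)
      = 1 + A.indicator (fun _ => Real.exp t - 1) x := by
    intro x; by_cases hx : x ∈ A <;> simp [hx]
  simp_rw [hfun]
  rw [integral_add (integrable_const 1)
    ((integrable_const (Real.exp t - 1)).indicator hA)]
  rw [integral_const, integral_indicator_const _ hA]
  simp [measure_univ, measureReal_def]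
  ring

lemma toReal_prob_le_one {S : Type*} [MeasurableSpace S] (μ : Measure S)
    [IsProbabilityMeasure μ] (A : Set S) : (μ A).toReal ≤ 1 := by
  have := ENNReal.toReal_mono (measure_ne_top μ Set.univ)
    (measure_mono (Set.subset_univ A))
  simpa [measure_univ] using this


lemma chernoff_pi {S : Type*} [MeasurableSpace S] {n : ℕ} (μ : Fin n → Measure S)
    [hP : ∀ i, IsProbabilityMeasure (μ i)] (A : Set S) (hA : MeasurableSet A) (t c : ℝ) :
    ((Measure.pi μ) {x | c ≤ ∑ i, A.indicator (fun _ => t) (x i)}).toReal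
      ≤ Real.exp (-c + t * ∑ i, (μ i A).toReal + n * t ^ 2 / 8) := by
  have hSmeas : Measurable fun x : Fin n → S => ∑ i, A.indicator (fun _ => t) (x i) :=
    Finset.measurable_sum _ fun i _ =>
      (measurable_const.indicator hA).comp (measurable_pi_apply i)
  have hFmeas : Measurable fun x : Fin n → S =>
      Real.exp (∑ i, A.indicator (fun _ => t) (x i)) := Real.measurable_exp.comp hSmeas
  have hbound : ∀ x : Fin n → S,
      ‖Real.exp (∑ i, A.indicator (fun _ => t) (x i))‖ ≤ Real.exp (n * |t|) := by
    intro x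
    rw [Real.norm_eq_abs, abs_of_pos (Real.exp_pos _)]
    apply Real.exp_le_exp.mpr
    calc ∑ i, A.indicator (fun _ => t) (x i) ≤ ∑ _i : Fin n, |t| := by
          apply Finset.sum_le_sum
          intro i _
          by_cases hx : x i ∈ A <;> simp [hx, le_abs_self, abs_nonneg]
      _ = n * |t| := by simp [Finset.sum_const, mul_comm]
  have hint : Integrable (fun x : Fin n → S =>
      Real.exp (∑ i, A.indicator (fun _ => t) (x i))) (Measure.pi μ) :=
    (integrable_const (Real.exp (n * |t|))).mono' hFmeas.aestronglyMeasurable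
      (Filter.Eventually.of_forall hbound)
  have hmarkov := mul_meas_ge_le_integral_of_nonneg
    (μ := Measure.pi μ)
    (Filter.Eventually.of_forall fun x : Fin n → S =>
      (Real.exp_pos (∑ i, A.indicator (fun _ => t) (x i))).le)
    hint (Real.exp c)
  have hset : {x : Fin n → S | Real.exp c ≤ Real.exp (∑ i, A.indicator (fun _ => t) (x i))}
      = {x : Fin n → S | c ≤ ∑ i, A.indicator (fun _ => t) (x i)} := by
    ext x; simp [Real.exp_le_exp]
  rw [hset] at hmarkov
  have hintF : ∫ x : Fin n → S, Real.exp (∑ i, A.indicator (fun _ => t) (x i)) ∂(Measure.pi μ)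
      = ∏ i, (1 - (μ i A).toReal + (μ i A).toReal * Real.exp t) := by
    have heq : ∀ x : Fin n → S, Real.exp (∑ i, A.indicator (fun _ => t) (x i))
        = ∏ i, Real.exp (A.indicator (fun _ => t) (x i)) := fun x => Real.exp_sum _ _
    simp_rw [heq]
    rw [integral_pi_prod μ (fun _ x => Real.exp (A.indicator (fun _ => t) x))]
    exact Finset.prod_congr rfl fun i _ => integral_exp_indicator (μ i) A hA t
  rw [hintF] at hmarkov
  have hprod : ∏ i, (1 - (μ i A).toReal + (μ i A).toReal * Real.exp t)
      ≤ ∏ i, Real.exp (t * (μ i A).toReal + t ^ 2 / 8) := by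
    apply Finset.prod_le_prod
    · intro i _
      have h0 := ENNReal.toReal_nonneg (a := μ i A)
      nlinarith [Real.exp_pos t, toReal_prob_le_one (μ i) A]
    · intro i _
      have h := hoeff_bernoulli ((μ i A).toReal) ENNReal.toReal_nonneg
        (toReal_prob_le_one (μ i) A) t
      calc 1 - (μ i A).toReal + (μ i A).toReal * Real.exp t
          ≤ Real.exp ((μ i A).toReal * t + t ^ 2 / 8) := h
        _ = Real.exp (t * (μ i A).toReal + t ^ 2 / 8) := by ring_nf
  have hexp : ∏ i, Real.exp (t * (μ i A).toReal + t ^ 2 / 8)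
      = Real.exp (t * ∑ i, (μ i A).toReal + n * t ^ 2 / 8) := by
    rw [← Real.exp_sum]
    congr 1
    rw [Finset.sum_add_distrib, ← Finset.mul_sum, Finset.sum_const]
    simp
    ring
  rw [hexp] at hprod
  have h1 : Real.exp c
        * ((Measure.pi μ) {x : Fin n → S | c ≤ ∑ i, A.indicator (fun _ => t) (x i)}).toReal
      ≤ Real.exp (t * ∑ i, (μ i A).toReal + n * t ^ 2 / 8) := le_trans hmarkov hprod
  have h2 : Real.exp (-c + t * ∑ i, (μ i A).toReal + n * t ^ 2 / 8)
      = Real.exp (t * ∑ i, (μ i A).toReal + n * t ^ 2 / 8) / Real.exp c := by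
    rw [← Real.exp_sub]; ring_nf
  rw [h2, le_div_iff₀ (Real.exp_pos c)]
  linarith [h1]

end Aux

/-- Lower bound for mixed text via a distinguishing set A with m(A) = h(A) + δ:
TV(mixed product, h^⊗N) ≥ 1 - 2 exp(-N(1-α)²δ²/2). -/
theorem tv_mixed_ge {S : Type*} [MeasurableSpace S]
    (m h : Measure S) [IsProbabilityMeasure m] [IsProbabilityMeasure h]
    (A : Set S) (hA : MeasurableSet A) (δ α : ℝ) (hδpos : 0 < δ)
    (hmA : (m A).toReal = (h A).toReal + δ)
    (a b : ℕ) (hα0 : 0 ≤ α) (hα1 : α < 1)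
    (ha : (a : ℝ) = (1 - α) * ((a : ℝ) + b)) :
    1 - 2 * Real.exp (-((((a : ℝ) + b) * (1 - α) ^ 2 * δ ^ 2) / 2))
      ≤ tv (Measure.pi fun i : Fin (a + b) => if (i : ℕ) < a then m else h)
           (Measure.pi fun _ : Fin (a + b) => h) := by
  haveI hinst : ∀ i : Fin (a + b),
      IsProbabilityMeasure ((fun i : Fin (a + b) => if (i : ℕ) < a then m else h) i) := by
    intro i; dsimp only; split <;> infer_instance
  set P := Measure.pi fun i : Fin (a + b) => if (i : ℕ) < a then m else h with hPdef
  set Q := Measure.pi fun _ : Fin (a + b) => h with hQdef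
  set q : ℝ := (h A).toReal with hq
  set Nr : ℝ := (a : ℝ) + b with hNr
  set t : ℝ := 2 * (1 - α) * δ with htdef
  set c : ℝ := t * (Nr * q + Nr * (1 - α) * δ / 2) with hcdef
  set X : ℝ := -((Nr * (1 - α) ^ 2 * δ ^ 2) / 2) with hX
  set E : Set (Fin (a + b) → S) :=
    {x | c ≤ ∑ i, A.indicator (fun _ => t) (x i)} with hEdef
  have hSmeas : Measurable fun x : Fin (a + b) → S =>
      ∑ i, A.indicator (fun _ => t) (x i) :=
    Finset.measurable_sum _ fun i _ =>
      (measurable_const.indicator hA).comp (measurable_pi_apply i)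
  have hE : MeasurableSet E := measurableSet_le measurable_const hSmeas
  -- Q-side bound
  have hQbound : (Q E).toReal ≤ Real.exp X := by
    have hc := chernoff_pi (fun _ : Fin (a + b) => h) A hA t c
    refine le_trans hc (Real.exp_le_exp.mpr (le_of_eq ?_))
    rw [Finset.sum_const, Finset.card_univ, Fintype.card_fin, nsmul_eq_mul]
    rw [hX, hcdef, htdef, hNr, hq]
    push_cast
    ring
  -- P-side bound on the complement
  have hsub : Eᶜ ⊆ {x : Fin (a + b) → S | -c ≤ ∑ i, A.indicator (fun _ => -t) (x i)} := by
    intro x hx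
    simp only [hEdef, Set.mem_compl_iff, Set.mem_setOf_eq, not_le] at hx ⊢
    have hneg : ∑ i, A.indicator (fun _ => -t) (x i)
        = -∑ i, A.indicator (fun _ => t) (x i) := by
      rw [← Finset.sum_neg_distrib]
      refine Finset.sum_congr rfl fun i _ => ?_
      by_cases hxi : x i ∈ A <;> simp [hxi]
    rw [hneg]
    linarith
  have hsummix : ∑ i : Fin (a + b),
      (((fun i : Fin (a + b) => if (i : ℕ) < a then m else h) i) A).toReal
      = (a : ℝ) * (m A).toReal + (b : ℝ) * q := by
    rw [Fin.sum_univ_add]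
    have e1 : ∀ i : Fin a,
        ((if ((Fin.castAdd b i : Fin (a + b)) : ℕ) < a then m else h) A).toReal
          = (m A).toReal := by
      intro i
      rw [if_pos]
      simpa using i.isLt
    have e2 : ∀ i : Fin b,
        ((if ((Fin.natAdd a i : Fin (a + b)) : ℕ) < a then m else h) A).toReal = q := by
      intro i
      rw [if_neg]
      simp only [Fin.coe_natAdd]
      omega
    rw [Finset.sum_congr rfl fun i _ => e1 i, Finset.sum_congr rfl fun i _ => e2 i]
    simp [mul_comm]
  have hPbound : (P Eᶜ).toReal ≤ Real.exp X := by
    have hmono := ENNReal.toReal_mono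
      (measure_ne_top P {x : Fin (a + b) → S | -c ≤ ∑ i, A.indicator (fun _ => -t) (x i)})
      (measure_mono hsub)
    refine le_trans hmono ?_
    have hc := chernoff_pi (fun i : Fin (a + b) => if (i : ℕ) < a then m else h) A hA (-t) (-c)
    refine le_trans hc (Real.exp_le_exp.mpr (le_of_eq ?_))
    rw [hsummix, hmA]
    rw [hX, hcdef, htdef, hNr, hq]
    push_cast
    linear_combination (-(2:ℝ) * (1 - α) * δ ^ 2) * ha
  have hPE : (P E).toReal + (P Eᶜ).toReal = 1 := by
    have hadd := measure_add_measure_compl (μ := P) hE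
    rw [measure_univ] at hadd
    rw [← ENNReal.toReal_add (measure_ne_top P E) (measure_ne_top P Eᶜ), hadd,
      ENNReal.toReal_one]
  have hbdd : BddAbove (Set.range fun B : {B : Set (Fin (a + b) → S) // MeasurableSet B} =>
      |(P B.1).toReal - (Q B.1).toReal|) := by
    refine ⟨2, ?_⟩
    rintro r ⟨B, rfl⟩
    have h1 : (P B.1).toReal ≤ 1 := toReal_prob_le_one P B.1
    have h2 : (Q B.1).toReal ≤ 1 := toReal_prob_le_one Q B.1
    have h3 := ENNReal.toReal_nonneg (a := P B.1)
    have h4 := ENNReal.toReal_nonneg (a := Q B.1)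
    exact abs_le.mpr ⟨by linarith, by linarith⟩
  have hle : |(P E).toReal - (Q E).toReal| ≤ tv P Q := by
    unfold tv
    exact le_ciSup hbdd ⟨E, hE⟩
  have hXeq : Real.exp (-((((a : ℝ) + b) * (1 - α) ^ 2 * δ ^ 2) / 2)) = Real.exp X := by
    rw [hX, hNr]
  rw [hXeq]
  have hfinal : 1 - 2 * Real.exp X ≤ (P E).toReal - (Q E).toReal := by linarith
  exact le_trans (le_trans hfinal (le_abs_self _)) hle
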